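/- Let N_r ≥ 2 be an integer. Among all (2N_r)! bijections R from {1,2}×{1,…,N_r} to {1,…,2N_r}, the fraction of bijections for which either (a) the two largest ranks lie in the same column and the third largest rank lies in the same row as the largest rank, or (b) the two largest ranks lie in the same row and the third largest rank lies in the other row, equals (N_r + 1)/(2(2N_r − 1)). This is the probability that the suboptimal relay selection (SRS) scheme's minimum SNR equals the third largest entry γ₃. -/

import Mathlib

theorem card_equiv_fix3 {α β : Type*} [DecidableEq α] [DecidableEq β] [Fintype α] [Fintype β]
    (hcard : Fintype.card α = Fintype.card β)
    (a b c : α) (x y z : β) (hab : a ≠ b) (hac : a ≠ c) (hbc : b ≠ c)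
    (hxy : x ≠ y) (hxz : x ≠ z) (hyz : y ≠ z) :
    Nat.card {R : α ≃ β // R a = x ∧ R b = y ∧ R c = z}
      = Nat.factorial (Fintype.card α - 3) := by
  classical
  set s : Set α := {a, b, c} with hs
  set t : Set β := {x, y, z} with ht
  have hmema : a ∈ s := by simp [hs]
  have hmemb : b ∈ s := by simp [hs]
  have hmemc : c ∈ s := by simp [hs]
  have hmemx : x ∈ t := by simp [ht]
  have hmemy : y ∈ t := by simp [ht]
  have hmemz : z ∈ t := by simp [ht]
  have h1 : ¬ (b = a) := Ne.symm hab
  have h2 : ¬ (c = a) := Ne.symm hac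
  have h3 : ¬ (c = b) := Ne.symm hbc
  have h4 : ¬ (y = x) := Ne.symm hxy
  have h5 : ¬ (z = x) := Ne.symm hxz
  have h6 : ¬ (z = y) := Ne.symm hyz
  obtain ⟨e₀, he₀a, he₀b, he₀c⟩ : ∃ e₀ : s ≃ t,
      (e₀ ⟨a, hmema⟩ : β) = x ∧ (e₀ ⟨b, hmemb⟩ : β) = y ∧ (e₀ ⟨c, hmemc⟩ : β) = z := by
    refine ⟨{
      toFun := fun p => if p.1 = a then ⟨x, hmemx⟩ else if p.1 = b then ⟨y, hmemy⟩ else ⟨z, hmemz⟩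
      invFun := fun q => if q.1 = x then ⟨a, hmema⟩ else if q.1 = y then ⟨b, hmemb⟩ else ⟨c, hmemc⟩
      left_inv := by
        rintro ⟨p, hp⟩
        simp only [hs, Set.mem_insert_iff, Set.mem_singleton_iff] at hp
        rcases hp with rfl | rfl | rfl <;> simp [h1, h2, h3, h4, h5, h6]
      right_inv := by
        rintro ⟨q, hq⟩
        simp only [ht, Set.mem_insert_iff, Set.mem_singleton_iff] at hq
        rcases hq with rfl | rfl | rfl <;> simp [h1, h2, h3, h4, h5, h6] },
      ?_, ?_, ?_⟩ <;> simp [h1, h2, h3]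
  have E1 : {R : α ≃ β // R a = x ∧ R b = y ∧ R c = z}
      ≃ {R : α ≃ β // ∀ p : s, R p = e₀ p} := by
    apply Equiv.subtypeEquivRight
    intro R
    constructor
    · rintro ⟨h1, h2, h3⟩ ⟨p, hp⟩
      simp only [hs, Set.mem_insert_iff, Set.mem_singleton_iff] at hp
      rcases hp with rfl | rfl | rfl
      · rw [h1, he₀a]
      · rw [h2, he₀b]
      · rw [h3, he₀c]
    · intro h
      refine ⟨?_, ?_, ?_⟩
      · rw [h ⟨a, hmema⟩, he₀a]
      · rw [h ⟨b, hmemb⟩, he₀b]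
      · rw [h ⟨c, hmemc⟩, he₀c]
  have E2 := Equiv.Set.compl e₀
  have hscard : Fintype.card s = 3 := by
    rw [Fintype.card_eq_nat_card, hs]
    rw [Nat.card_coe_set_eq]
    simp [Set.ncard_insert_of_notMem, hab, hac, hbc, Set.ncard_singleton]
  have htcard : Fintype.card t = 3 := by
    rw [Fintype.card_eq_nat_card, ht]
    rw [Nat.card_coe_set_eq]
    simp [Set.ncard_insert_of_notMem, hxy, hxz, hyz, Set.ncard_singleton]
  have hsc : Fintype.card (sᶜ : Set α) = Fintype.card α - 3 := by
    rw [Fintype.card_compl_set, hscard]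
  have htc : Fintype.card (tᶜ : Set β) = Fintype.card α - 3 := by
    rw [Fintype.card_compl_set, htcard, hcard]
  have E3 : ((sᶜ : Set α) ≃ (tᶜ : Set β)) := Fintype.equivOfCardEq (by rw [hsc, htc])
  calc Nat.card {R : α ≃ β // R a = x ∧ R b = y ∧ R c = z}
      = Nat.card ((sᶜ : Set α) ≃ (tᶜ : Set β)) := Nat.card_congr (E1.trans E2)
    _ = Nat.factorial (Fintype.card α - 3) := by
        rw [Nat.card_eq_fintype_card, Fintype.card_equiv E3, hsc]

theorem count_main (Nr : ℕ) (hNr : 2 ≤ Nr) (x1 x2 x3 : Fin (2 * Nr))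
    (h12 : x1 ≠ x2) (h13 : x1 ≠ x3) (h23 : x2 ≠ x3) :
    Nat.card {R : (Fin 2 × Fin Nr) ≃ Fin (2 * Nr) //
        ((R.symm x1).2 = (R.symm x2).2 ∧ (R.symm x3).1 = (R.symm x1).1) ∨
        ((R.symm x1).1 = (R.symm x2).1 ∧ (R.symm x3).1 ≠ (R.symm x1).1)}
      = (2 * Nr * (Nr - 1) + 2 * Nr * ((Nr - 1) * Nr)) * Nat.factorial (2 * Nr - 3) := by
  set α := Fin 2 × Fin Nr with hα
  set Qa : α × α × α → Prop :=
    fun t => t.2.1.1 ≠ t.1.1 ∧ t.2.1.2 = t.1.2 ∧ t.2.2.1 = t.1.1 ∧ t.2.2.2 ≠ t.1.2 with hQa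
  set Qb : α × α × α → Prop :=
    fun t => t.2.1.1 = t.1.1 ∧ t.2.1.2 ≠ t.1.2 ∧ t.2.2.1 ≠ t.1.1 with hQb
  set Φ : (α ≃ Fin (2 * Nr)) → α × α × α :=
    fun R => (R.symm x1, R.symm x2, R.symm x3) with hΦ
  have key : ∀ R : α ≃ Fin (2 * Nr),
      (((R.symm x1).2 = (R.symm x2).2 ∧ (R.symm x3).1 = (R.symm x1).1) ∨
        ((R.symm x1).1 = (R.symm x2).1 ∧ (R.symm x3).1 ≠ (R.symm x1).1))
      ↔ (Qa (Φ R) ∨ Qb (Φ R)) := by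
    intro R
    have inj := R.symm.injective
    have d12 : R.symm x1 ≠ R.symm x2 := fun h => h12 (inj h)
    have d13 : R.symm x1 ≠ R.symm x3 := fun h => h13 (inj h)
    simp only [hQa, hQb, hΦ]
    constructor
    · rintro (⟨hcol, hrow⟩ | ⟨hrow, hne⟩)
      · refine Or.inl ⟨?_, hcol.symm, hrow, ?_⟩
        · intro h
          exact d12 (Prod.ext h.symm hcol)
        · intro h
          exact d13 (Prod.ext hrow.symm h.symm)
      · refine Or.inr ⟨hrow.symm, ?_, hne⟩
        intro h
        exact d12 (Prod.ext hrow h.symm)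
    · rintro (⟨_, h2, h3, _⟩ | ⟨h1', _, h3'⟩)
      · exact Or.inl ⟨h2.symm, h3⟩
      · exact Or.inr ⟨h1'.symm, h3'⟩
  have fiber_card : ∀ t : {t : α × α × α // Qa t ∨ Qb t},
      Nat.card {R : α ≃ Fin (2 * Nr) // Φ R = (t : α × α × α)} = Nat.factorial (2 * Nr - 3) := by
    rintro ⟨⟨a, b, c⟩, hQ⟩
    have hab : a ≠ b := by
      rcases hQ with ⟨h1, h2, h3, h4⟩ | ⟨h1, h2, h3⟩
      · exact fun h => h1 (h ▸ rfl)
      · exact fun h => h2 (h ▸ rfl)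
    have hac : a ≠ c := by
      rcases hQ with ⟨h1, h2, h3, h4⟩ | ⟨h1, h2, h3⟩
      · exact fun h => h4 (h ▸ rfl)
      · exact fun h => h3 (h ▸ rfl)
    have hbc : b ≠ c := by
      rcases hQ with ⟨h1, h2, h3, h4⟩ | ⟨h1, h2, h3⟩
      · exact fun h => h1 (by rw [h, h3])
      · exact fun h => h3 (by rw [← h, h1])
    have E : {R : α ≃ Fin (2 * Nr) // Φ R = (a, b, c)}
        ≃ {S : Fin (2 * Nr) ≃ α // S x1 = a ∧ S x2 = b ∧ S x3 = c} := by
      refine Equiv.subtypeEquiv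
        ⟨Equiv.symm, Equiv.symm, fun R => R.symm_symm, fun S => S.symm_symm⟩ ?_
      intro R
      simp only [hΦ, Prod.mk.injEq, Equiv.coe_fn_mk]
    rw [Nat.card_congr E]
    have hc : Fintype.card (Fin (2 * Nr)) = Fintype.card α := by
      simp [hα, mul_comm]
    rw [card_equiv_fix3 hc x1 x2 x3 a b c h12 h13 h23 hab hac hbc]
    simp
  have hdisj : Disjoint Qa Qb := by
    rw [Pi.disjoint_iff]
    intro t
    rw [Prop.disjoint_iff]
    rintro ⟨⟨h1, -, -, -⟩, ⟨h1', -, -⟩⟩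
    exact h1 h1'
  have Ea : {t : α × α × α // Qa t}
      ≃ Σ a : α, ({u : Fin 2 // u ≠ a.1} × {v : Fin Nr // v ≠ a.2}) := by
    refine ⟨fun t => ⟨t.1.1, (⟨t.1.2.1.1, t.2.1⟩, ⟨t.1.2.2.2, t.2.2.2.2⟩)⟩,
      fun s => ⟨(s.1, ((s.2.1.1, s.1.2), (s.1.1, s.2.2.1))), ⟨s.2.1.2, rfl, rfl, s.2.2.2⟩⟩,
      ?_, fun s => rfl⟩
    rintro ⟨⟨a, b, c⟩, h1, h2, h3, h4⟩
    apply Subtype.ext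
    simp only
    rw [← h2, ← h3]
  have Eb : {t : α × α × α // Qb t}
      ≃ Σ a : α, ({v : Fin Nr // v ≠ a.2} × ({u : Fin 2 // u ≠ a.1} × Fin Nr)) := by
    refine ⟨fun t => ⟨t.1.1, (⟨t.1.2.1.2, t.2.2.1⟩, ⟨t.1.2.2.1, t.2.2.2⟩, t.1.2.2.2)⟩,
      fun s => ⟨(s.1, ((s.1.1, s.2.1.1), (s.2.2.1.1, s.2.2.2))), ⟨rfl, s.2.1.2, s.2.2.1.2⟩⟩,
      ?_, fun s => rfl⟩
    rintro ⟨⟨a, b, c⟩, h1, h2, h3⟩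
    apply Subtype.ext
    simp only
    rw [← h1]
  have hFin2 : ∀ w : Fin 2, Fintype.card {u : Fin 2 // u ≠ w} = 1 := by
    intro w
    have : Fintype.card {u : Fin 2 // ¬ u = w} = Fintype.card (Fin 2) - Fintype.card {u : Fin 2 // u = w} :=
      Fintype.card_subtype_compl _
    simpa [Fintype.card_subtype_eq] using this
  have hFinNr : ∀ w : Fin Nr, Fintype.card {v : Fin Nr // v ≠ w} = Nr - 1 := by
    intro w
    have : Fintype.card {v : Fin Nr // ¬ v = w} = Fintype.card (Fin Nr) - Fintype.card {v : Fin Nr // v = w} :=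
      Fintype.card_subtype_compl _
    simpa [Fintype.card_subtype_eq] using this
  have hcardQa : Nat.card {t : α × α × α // Qa t} = 2 * Nr * (Nr - 1) := by
    rw [Nat.card_congr Ea, Nat.card_eq_fintype_card, Fintype.card_sigma]
    have : ∀ a : α, Fintype.card ({u : Fin 2 // u ≠ a.1} × {v : Fin Nr // v ≠ a.2}) = Nr - 1 := by
      intro a
      rw [Fintype.card_prod, hFin2, hFinNr, one_mul]
    simp only [this, Finset.sum_const, smul_eq_mul]
    simp [hα, Fintype.card_prod, mul_comm, Finset.card_univ]
  have hcardQb : Nat.card {t : α × α × α // Qb t} = 2 * Nr * ((Nr - 1) * Nr) := by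
    rw [Nat.card_congr Eb, Nat.card_eq_fintype_card, Fintype.card_sigma]
    have : ∀ a : α, Fintype.card ({v : Fin Nr // v ≠ a.2} × ({u : Fin 2 // u ≠ a.1} × Fin Nr))
        = (Nr - 1) * Nr := by
      intro a
      rw [Fintype.card_prod, Fintype.card_prod, hFin2, hFinNr, Fintype.card_fin, one_mul]
    simp only [this, Finset.sum_const, smul_eq_mul]
    simp [hα, Fintype.card_prod, mul_comm, Finset.card_univ]
  have hQcard : Nat.card {t : α × α × α // Qa t ∨ Qb t}
      = 2 * Nr * (Nr - 1) + 2 * Nr * ((Nr - 1) * Nr) := by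
    classical
    rw [Nat.card_congr (subtypeOrEquiv Qa Qb hdisj), Nat.card_eq_fintype_card, Fintype.card_sum,
      ← Nat.card_eq_fintype_card, ← Nat.card_eq_fintype_card, hcardQa, hcardQb]
  classical
  rw [← Nat.card_congr (Equiv.sigmaSubtypeFiberEquivSubtype (q := fun t => Qa t ∨ Qb t) Φ key)]
  rw [Nat.card_eq_fintype_card, Fintype.card_sigma]
  have : ∀ t : {t : α × α × α // Qa t ∨ Qb t},
      Fintype.card {R : α ≃ Fin (2 * Nr) // Φ R = (t : α × α × α)} = Nat.factorial (2 * Nr - 3) := by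
    intro t
    rw [← Nat.card_eq_fintype_card]
    exact fiber_card t
  simp only [this, Finset.sum_const, smul_eq_mul, Finset.card_univ, ← Nat.card_eq_fintype_card]
  rw [hQcard]

/-- For `Nr ≥ 2`, among all `(2·Nr)!` bijections `R` from `{1,2} × {1,…,Nr}` to
`{1,…,2·Nr}` (the rank of cell `c` is `(R c).val + 1`), the fraction of
bijections for which either (a) the two largest ranks lie in the same column and
the third largest rank lies in the same row as the largest rank, or (b) the two
largest ranks lie in the same row and the third largest rank lies in the other
row, equals `(Nr + 1)/(2(2·Nr − 1))`.  This is the probability that the SRS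
scheme's minimum SNR equals the third largest entry `γ₃`. -/
theorem SRS_min_eq_third_largest_fraction (Nr : ℕ) (hNr : 2 ≤ Nr) :
    (Nat.card {R : (Fin 2 × Fin Nr) ≃ Fin (2 * Nr) //
        ((R.symm ⟨2 * Nr - 1, by omega⟩).2 = (R.symm ⟨2 * Nr - 2, by omega⟩).2 ∧
          (R.symm ⟨2 * Nr - 3, by omega⟩).1 = (R.symm ⟨2 * Nr - 1, by omega⟩).1) ∨
        ((R.symm ⟨2 * Nr - 1, by omega⟩).1 = (R.symm ⟨2 * Nr - 2, by omega⟩).1 ∧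
          (R.symm ⟨2 * Nr - 3, by omega⟩).1 ≠ (R.symm ⟨2 * Nr - 1, by omega⟩).1)} : ℝ)
      / (Nat.factorial (2 * Nr) : ℝ)
      = ((Nr : ℝ) + 1) / (2 * (2 * (Nr : ℝ) - 1)) := by
  have hkey := count_main Nr hNr ⟨2 * Nr - 1, by omega⟩ ⟨2 * Nr - 2, by omega⟩
    ⟨2 * Nr - 3, by omega⟩ (by simp [Fin.ext_iff]; omega) (by simp [Fin.ext_iff]; omega)
    (by simp [Fin.ext_iff]; omega)
  rw [hkey]
  obtain ⟨m, hm⟩ : ∃ m, 2 * Nr = m + 4 := ⟨2 * Nr - 4, by omega⟩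
  have hfact : Nat.factorial (2 * Nr)
      = (2 * Nr) * ((2 * Nr - 1) * ((2 * Nr - 2) * Nat.factorial (2 * Nr - 3))) := by
    have e1 : 2 * Nr - 1 = m + 3 := by omega
    have e2 : 2 * Nr - 2 = m + 2 := by omega
    have e3 : 2 * Nr - 3 = m + 1 := by omega
    rw [e1, e2, e3, hm]
    rw [show m + 4 = (m + 3) + 1 from rfl, Nat.factorial_succ,
      show m + 3 = (m + 2) + 1 from rfl, Nat.factorial_succ,
      show m + 2 = (m + 1) + 1 from rfl, Nat.factorial_succ]
  rw [hfact]
  have c1 : ((2 * Nr - 1 : ℕ) : ℝ) = 2 * (Nr : ℝ) - 1 := by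
    rw [Nat.cast_sub (by omega)]; push_cast; ring
  have c2 : ((2 * Nr - 2 : ℕ) : ℝ) = 2 * (Nr : ℝ) - 2 := by
    rw [Nat.cast_sub (by omega)]; push_cast; ring
  have cN : ((Nr - 1 : ℕ) : ℝ) = (Nr : ℝ) - 1 := by
    rw [Nat.cast_sub (by omega)]; push_cast; ring
  push_cast [c1, c2, cN]
  have hF : ((Nat.factorial (2 * Nr - 3) : ℕ) : ℝ) ≠ 0 :=
    Nat.cast_ne_zero.2 (Nat.factorial_ne_zero _)
  have hN : (2 : ℝ) ≤ (Nr : ℝ) := by exact_mod_cast hNr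
  have h1 : (Nr : ℝ) ≠ 0 := by linarith
  have h2 : 2 * (Nr : ℝ) - 1 ≠ 0 := by intro h; nlinarith
  have h3 : 2 * (Nr : ℝ) - 2 ≠ 0 := by intro h; nlinarith
  have h4 : (Nr : ℝ) - 1 ≠ 0 := by intro h; nlinarith
  field_simp
  ring
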